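/- Let E be an entire function with E(-z) = E*(z) for all z and E(iλ)² + E*(iλ)² ≠ 0, where λ > 0. Then the function K(z) = P_λ(z)(1 - (E(z)² + E*(z)²)/(E(iλ)² + E*(iλ)²)), where P_λ(z) = λ/(π(z² + λ²)), extends to an entire function, and if E has exponential type τ then K has exponential type at most 2τ. -/
import Mathlib
open Complex

noncomputable def estar (E : ℂ → ℂ) (z : ℂ) : ℂ := (starRingEnd ℂ) (E ((starRingEnd ℂ) z))

/-- `F` has exponential type `τ`. -/
def ExpType (F : ℂ → ℂ) (τ : ℝ) : Prop :=
  ∀ ε > (0 : ℝ), ∃ C : ℝ, ∀ z : ℂ, ‖F z‖ ≤ C * Real.exp ((τ + ε) * ‖z‖)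

lemma estar_diff {E : ℂ → ℂ} (hE : Differentiable ℂ E) : Differentiable ℂ (estar E) := by
  intro z
  have h1 : HasDerivAt E (deriv E ((starRingEnd ℂ) z)) ((starRingEnd ℂ) z) :=
    (hE _).hasDerivAt
  rw [hasDerivAt_iff_tendsto_slope] at h1
  have hmap : Filter.Tendsto (starRingEnd ℂ) (nhdsWithin z {z}ᶜ)
      (nhdsWithin ((starRingEnd ℂ) z) {((starRingEnd ℂ) z)}ᶜ) := by
    rw [tendsto_nhdsWithin_iff]
    constructor
    · exact (Complex.continuous_conj.tendsto z).mono_left nhdsWithin_le_nhds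
    · filter_upwards [self_mem_nhdsWithin] with y hy
      simp only [Set.mem_compl_iff, Set.mem_singleton_iff] at hy ⊢
      exact fun h => hy (by simpa using congrArg (starRingEnd ℂ) h)
  have h2 := (Complex.continuous_conj.tendsto _).comp (h1.comp hmap)
  have h3 : HasDerivAt (estar E) ((starRingEnd ℂ) (deriv E ((starRingEnd ℂ) z))) z := by
    rw [hasDerivAt_iff_tendsto_slope]
    refine h2.congr fun y => ?_
    simp only [Function.comp_apply, slope_def_field, estar]
    rw [map_div₀, map_sub, map_sub]
    simp
  exact h3.differentiableAt

lemma dslope_diff {f : ℂ → ℂ} (c : ℂ) (hf : Differentiable ℂ f) :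
    Differentiable ℂ (dslope f c) := by
  intro z
  rcases eq_or_ne z c with rfl | hz
  · obtain ⟨p, hp⟩ := hf.analyticAt z
    exact hp.has_fpower_series_dslope_fslope.analyticAt.differentiableAt
  · exact (differentiableAt_dslope_of_ne hz).mpr (hf z)

/-- The function `K(z) = P_lam(z)(1 - (E² + E*²)/(E(i lam)² + E*(i lam)²))`
extends to an entire function of exponential type at most `2τ` when `E` has
exponential type `τ`. -/
theorem poisson_interpolation_entire
    (lam : ℝ) (hlam : 0 < lam)
    (E : ℂ → ℂ) (hE : Differentiable ℂ E)
    (hsym : ∀ z : ℂ, E (-z) = estar E z)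
    (hden : E (lam * Complex.I) ^ 2 + estar E (lam * Complex.I) ^ 2 ≠ 0) :
    ∃ K : ℂ → ℂ, Differentiable ℂ K ∧
      (∀ z : ℂ, z ^ 2 + (lam : ℂ) ^ 2 ≠ 0 →
        K z = (lam : ℂ) / (Real.pi * (z ^ 2 + (lam : ℂ) ^ 2)) *
          (1 - (E z ^ 2 + estar E z ^ 2) /
            (E (lam * Complex.I) ^ 2 + estar E (lam * Complex.I) ^ 2))) ∧
      (∀ τ : ℝ, ExpType E τ → ExpType K (2 * τ)) := by
  set a : ℂ := (lam : ℂ) * Complex.I with ha_def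
  set D : ℂ := E a ^ 2 + estar E a ^ 2 with hD_def
  have hEs : Differentiable ℂ (estar E) := estar_diff hE
  set G : ℂ → ℂ := fun z => 1 - (E z ^ 2 + estar E z ^ 2) / D with hG_def
  have hG : Differentiable ℂ G :=
    (differentiable_const 1).sub (((hE.pow 2).add (hEs.pow 2)).div_const D)
  have ha2 : a ^ 2 = -(lam : ℂ) ^ 2 := by
    rw [ha_def, mul_pow, Complex.I_sq]; ring
  have hstar_neg : ∀ z : ℂ, estar E (-z) = E z := by
    intro z
    have := hsym (-z); rw [neg_neg] at this; exact this.symm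
  have hG1 : G a = 0 := by
    simp only [hG_def, ← hD_def, div_self hden, sub_self]
  have hG2 : G (-a) = 0 := by
    simp only [hG_def]
    rw [hsym a, hstar_neg a]
    rw [show estar E a ^ 2 + E a ^ 2 = D by rw [hD_def]; ring, div_self hden, sub_self]
  set H : ℂ → ℂ := dslope G a with hH_def
  have hH : Differentiable ℂ H := dslope_diff a hG
  have hHa : H (-a) = 0 := by
    have hne : -a ≠ a := by
      intro h
      have h2 : (2 : ℂ) * a = 0 := by linear_combination -h
      have ha0 : a ≠ 0 := by
        rw [ha_def]
        exact mul_ne_zero (Complex.ofReal_ne_zero.mpr hlam.ne') Complex.I_ne_zero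
      simp [ha0] at h2
    rw [hH_def, dslope_of_ne G hne, slope_def_field, hG1, hG2, sub_zero, zero_div]
  set K : ℂ → ℂ := fun z => ((lam : ℂ) / (Real.pi : ℂ)) * dslope H (-a) z with hK_def
  have hK : Differentiable ℂ K := (dslope_diff (-a) hH).const_mul _
  have hKeq : ∀ z : ℂ, z ^ 2 + (lam : ℂ) ^ 2 ≠ 0 →
      K z = (lam : ℂ) / (Real.pi * (z ^ 2 + (lam : ℂ) ^ 2)) * G z := by
    intro z hz
    have hz1 : z ≠ a := by
      rintro rfl; exact hz (by rw [ha2]; ring)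
    have hz2 : z ≠ -a := by
      rintro rfl; exact hz (by rw [neg_pow, ha2]; ring)
    have e1 : dslope H (-a) z = H z / (z + a) := by
      rw [dslope_of_ne H hz2, slope_def_field, hHa, sub_zero, sub_neg_eq_add]
    have e2 : H z = G z / (z - a) := by
      rw [hH_def, dslope_of_ne G hz1, slope_def_field, hG1, sub_zero]
    have hfac : (z - a) * (z + a) = z ^ 2 + (lam : ℂ) ^ 2 := by
      have h : (z - a) * (z + a) = z ^ 2 - a ^ 2 := by ring
      rw [h, ha2]; ring
    have hza : z - a ≠ 0 := sub_ne_zero.mpr hz1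
    have hzb : z + a ≠ 0 := by
      intro h; exact hz2 (by linear_combination h)
    have hpi : (Real.pi : ℂ) ≠ 0 := Complex.ofReal_ne_zero.mpr Real.pi_ne_zero
    show ((lam : ℂ) / (Real.pi : ℂ)) * dslope H (-a) z = _
    rw [e1, e2, div_div, hfac]
    field_simp
  refine ⟨K, hK, fun z hz => hKeq z hz, ?_⟩
  intro τ hτE ε hε
  -- τ is nonnegative, otherwise E ≡ 0 contradicting hden
  have hτ0 : 0 ≤ τ := by
    by_contra hneg
    push_neg at hneg
    obtain ⟨C, hC⟩ := hτE (-τ) (by linarith)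
    have hbd : ∀ z : ℂ, ‖E z‖ ≤ C := by
      intro z; simpa using hC z
    have hconst : ∀ z : ℂ, E z = E 0 := by
      intro z
      apply hE.apply_eq_apply_of_bounded
      exact isBounded_iff_forall_norm_le.mpr ⟨C, by rintro x ⟨w, rfl⟩; exact hbd w⟩
    obtain ⟨C', hC'⟩ := hτE (-τ / 2) (by linarith)
    have h0 : E 0 = 0 := by
      by_contra hE0
      have h1 : Filter.Tendsto (fun n : ℕ => (τ + -τ / 2) * (n : ℝ))
          Filter.atTop Filter.atBot :=
        (Filter.tendsto_const_mul_atBot_of_neg (by linarith)).mpr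
          tendsto_natCast_atTop_atTop
      have hto : Filter.Tendsto (fun n : ℕ => C' * Real.exp ((τ + -τ / 2) * (n : ℝ)))
          Filter.atTop (nhds 0) := by
        have := (Real.tendsto_exp_atBot.comp h1).const_mul C'
        simpa using this
      have hle : ∀ n : ℕ, ‖E 0‖ ≤ C' * Real.exp ((τ + -τ / 2) * (n : ℝ)) := by
        intro n
        have h := hC' (n : ℂ)
        rwa [hconst (n : ℂ), Complex.norm_natCast] at h
      have : ‖E 0‖ ≤ 0 := ge_of_tendsto hto (Filter.Eventually.of_forall hle)
      exact hE0 (norm_le_zero_iff.mp this)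
    apply hden
    have hEa : E a = 0 := by rw [hconst a, h0]
    have hEsa : estar E a = 0 := by
      rw [estar, hconst ((starRingEnd ℂ) a), h0, map_zero]
    rw [hD_def, hEa, hEsa]; ring
  obtain ⟨C, hC⟩ := hτE (ε / 2) (by linarith)
  have hC0 : 0 ≤ C := le_trans (norm_nonneg _) ((hC 0).trans (by simp))
  have hDpos : 0 < ‖D‖ := norm_pos_iff.mpr hden
  set t : ℝ := 2 * τ + ε with ht_def
  have ht0 : 0 < t := by positivity
  set B : ℝ := 1 + 2 * C ^ 2 / ‖D‖ with hB_def
  have hB0 : 0 ≤ B := by positivity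
  have hGbd : ∀ z : ℂ, ‖G z‖ ≤ B * Real.exp (t * ‖z‖) := by
    intro z
    have hEz : ‖E z‖ ≤ C * Real.exp ((τ + ε / 2) * ‖z‖) := hC z
    have hEsz : ‖estar E z‖ ≤ C * Real.exp ((τ + ε / 2) * ‖z‖) := by
      have h1 : ‖estar E z‖ = ‖E ((starRingEnd ℂ) z)‖ := by
        rw [estar]; exact RCLike.norm_conj _
      have h2 := hC ((starRingEnd ℂ) z)
      rw [RCLike.norm_conj] at h2
      rw [h1]; exact h2
    have hexp : Real.exp ((τ + ε / 2) * ‖z‖) ^ 2 = Real.exp (t * ‖z‖) := by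
      rw [sq, ← Real.exp_add]
      congr 1
      rw [ht_def]; ring
    have h1 : ‖E z ^ 2 + estar E z ^ 2‖ ≤ 2 * C ^ 2 * Real.exp (t * ‖z‖) := by
      calc ‖E z ^ 2 + estar E z ^ 2‖ ≤ ‖E z‖ ^ 2 + ‖estar E z‖ ^ 2 := by
            refine (norm_add_le _ _).trans ?_
            simp [norm_pow]
        _ ≤ (C * Real.exp ((τ + ε / 2) * ‖z‖)) ^ 2
            + (C * Real.exp ((τ + ε / 2) * ‖z‖)) ^ 2 := by
            gcongr

        _ = 2 * C ^ 2 * Real.exp (t * ‖z‖) := by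
            rw [mul_pow, hexp]; ring
    have hone : (1 : ℝ) ≤ Real.exp (t * ‖z‖) :=
      Real.one_le_exp (by positivity)
    calc ‖G z‖ ≤ 1 + ‖E z ^ 2 + estar E z ^ 2‖ / ‖D‖ := by
          rw [hG_def]
          refine (norm_sub_le _ _).trans ?_
          simp [norm_div]
      _ ≤ 1 + 2 * C ^ 2 * Real.exp (t * ‖z‖) / ‖D‖ := by gcongr
      _ ≤ Real.exp (t * ‖z‖) + 2 * C ^ 2 * Real.exp (t * ‖z‖) / ‖D‖ := by gcongr
      _ = B * Real.exp (t * ‖z‖) := by rw [hB_def]; ring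
  obtain ⟨M, hM⟩ := (isCompact_closedBall (0 : ℂ) (2 * lam)).exists_bound_of_continuousOn
    hK.continuous.continuousOn
  have hM0 : 0 ≤ M :=
    le_trans (norm_nonneg _) (hM 0 (Metric.mem_closedBall_self (by positivity)))
  refine ⟨max M (B * lam / (Real.pi * (3 * lam ^ 2))), fun z => ?_⟩
  rcases le_or_gt ‖z‖ (2 * lam) with hzn | hzn
  · have h1 : ‖K z‖ ≤ M := hM z (by simpa [Metric.mem_closedBall] using hzn)
    have h2 : (1 : ℝ) ≤ Real.exp (t * ‖z‖) := Real.one_le_exp (by positivity)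
    calc ‖K z‖ ≤ M := h1
      _ ≤ M * Real.exp (t * ‖z‖) := le_mul_of_one_le_right hM0 h2
      _ ≤ max M (B * lam / (Real.pi * (3 * lam ^ 2))) * Real.exp (t * ‖z‖) := by
          gcongr; exact le_max_left _ _
  · have h1 : ‖z‖ ^ 2 ≤ ‖z ^ 2 + (lam : ℂ) ^ 2‖ + lam ^ 2 := by
      have h := norm_add_le (z ^ 2 + (lam : ℂ) ^ 2) (-((lam : ℂ) ^ 2))
      rw [add_neg_cancel_right] at h
      calc ‖z‖ ^ 2 = ‖z ^ 2‖ := (norm_pow z 2).symm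
        _ ≤ ‖z ^ 2 + (lam : ℂ) ^ 2‖ + ‖-((lam : ℂ) ^ 2)‖ := h
        _ = ‖z ^ 2 + (lam : ℂ) ^ 2‖ + lam ^ 2 := by
            rw [norm_neg, norm_pow, Complex.norm_real, Real.norm_of_nonneg hlam.le]
    have hlow : 3 * lam ^ 2 ≤ ‖z ^ 2 + (lam : ℂ) ^ 2‖ := by nlinarith
    have hne : z ^ 2 + (lam : ℂ) ^ 2 ≠ 0 := by
      intro h; rw [h, norm_zero] at hlow; nlinarith
    have hXpos : (0 : ℝ) < ‖z ^ 2 + (lam : ℂ) ^ 2‖ := lt_of_lt_of_le (by positivity) hlow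
    have hKz : ‖K z‖ = lam / (Real.pi * ‖z ^ 2 + (lam : ℂ) ^ 2‖) * ‖G z‖ := by
      rw [hKeq z hne, norm_mul, norm_div, norm_mul, Complex.norm_real, Complex.norm_real,
        Real.norm_of_nonneg hlam.le, Real.norm_of_nonneg Real.pi_pos.le]
    calc ‖K z‖ = lam / (Real.pi * ‖z ^ 2 + (lam : ℂ) ^ 2‖) * ‖G z‖ := hKz
      _ ≤ lam / (Real.pi * (3 * lam ^ 2)) * (B * Real.exp (t * ‖z‖)) := by
          gcongr
          exact hGbd z
      _ = B * lam / (Real.pi * (3 * lam ^ 2)) * Real.exp (t * ‖z‖) := by ring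
      _ ≤ max M (B * lam / (Real.pi * (3 * lam ^ 2))) * Real.exp (t * ‖z‖) := by
          gcongr; exact le_max_right _ _
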